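/- Suppose w ∈ D3 is orthogonal to the image of L. Then for all v1, v2 ∈ D2 one has K(L(v1,v2), w) = ημ·⟨v1,v2⟩·w; in particular K(v,w) = 0 for every v ∈ D2. -/
import Mathlib


open scoped RealInnerProductSpace
open Module Submodule

noncomputable section

variable {V : Type*} [NormedAddCommGroup V] [InnerProductSpace ℝ V]

/-- The curvature-type operator built from `ε` and the difference tensor `K`:
`R(X,Y)Z = ε(⟨Y,Z⟩X − ⟨X,Z⟩Y) − K(X,K(Y,Z)) + K(Y,K(X,Z))`. -/
def Rc (ε : ℝ) (K : V →ₗ[ℝ] V →ₗ[ℝ] V) (X Y Z : V) : V :=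
  ε • (⟪Y, Z⟫ • X - ⟪X, Z⟫ • Y) - K X (K Y Z) + K Y (K X Z)

/-- The bilinear map `L(v₁,v₂) = K(v₁,v₂) − (λ₁/2)⟨v₁,v₂⟩ e₁`. -/
def Lop (lam1 : ℝ) (e1 : V) (K : V →ₗ[ℝ] V →ₗ[ℝ] V) (v1 v2 : V) : V :=
  K v1 v2 - (lam1 / 2 * ⟪v1, v2⟫) • e1

/-- The distribution `D₂ = {v : v ⟂ e₁, K(e₁,v) = (λ₁/2)v}`. -/
def D2s (lam1 : ℝ) (e1 : V) (K : V →ₗ[ℝ] V →ₗ[ℝ] V) : Submodule ℝ V :=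
  (ℝ ∙ e1)ᗮ ⊓ Module.End.eigenspace (K e1) (lam1 / 2)

/-- The distribution `D₃ = {w : w ⟂ e₁, K(e₁,w) = μw}`. -/
def D3s (mu : ℝ) (e1 : V) (K : V →ₗ[ℝ] V →ₗ[ℝ] V) : Submodule ℝ V :=
  (ℝ ∙ e1)ᗮ ⊓ Module.End.eigenspace (K e1) mu

/-- The operator `P_v(ṽ) = K(v, L(v,ṽ))`, as a linear endomorphism of `V`. -/
def Pop (lam1 : ℝ) (e1 : V) (K : V →ₗ[ℝ] V →ₗ[ℝ] V) (v : V) : V →ₗ[ℝ] V :=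
  (K v) ∘ₗ (K v - (lam1 / 2) •
    ((LinearMap.toSpanSingleton ℝ V e1) ∘ₗ (innerSL ℝ v).toLinearMap))

/-- The eigenspace `V_v(c)` of `P_v` within the orthogonal complement of `v` in `D₂`. -/
def Vvs (lam1 c : ℝ) (e1 : V) (K : V →ₗ[ℝ] V →ₗ[ℝ] V) (v : V) : Submodule ℝ V :=
  D2s lam1 e1 K ⊓ (ℝ ∙ v)ᗮ ⊓ Module.End.eigenspace (Pop lam1 e1 K v) c

/-- Lemma 4.5: if `w ∈ D₃` is orthogonal to the image of `L`, then
`K(L(v₁,v₂),w) = ημ⟨v₁,v₂⟩w`, and in particular `K(v,w) = 0` for every `v ∈ D₂`. -/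
theorem stmt_7 {V : Type*} [NormedAddCommGroup V] [InnerProductSpace ℝ V]
    (n m : ℕ) (hn : finrank ℝ V = n) (hn2 : 2 ≤ n)
    (ε : ℝ) (hε : ε = 1 ∨ ε = -1)
    (K : V →ₗ[ℝ] V →ₗ[ℝ] V)
    (hKsymm : ∀ X Y : V, K X Y = K Y X)
    (hKcub : ∀ X Y Z : V, ⟪K X Y, Z⟫ = ⟪K X Z, Y⟫)
    (hpar : ∀ X Y Z U : V,
      Rc ε K X Y (K Z U) = K (Rc ε K X Y Z) U + K Z (Rc ε K X Y U))
    (e1 : V) (he1 : ‖e1‖ = 1)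
    (lam1 η μ τ : ℝ)
    (hlam1 : lam1 = ⟪K e1 e1, e1⟫) (hlam1pos : 0 < lam1)
    (hmax : ∀ u : V, ‖u‖ = 1 → ⟪K u u, u⟫ ≤ lam1)
    (hdisc : 0 < lam1 ^ 2 - 4 * ε)
    (hη : η = Real.sqrt (lam1 ^ 2 - 4 * ε) / 2)
    (hμ : μ = (lam1 - Real.sqrt (lam1 ^ 2 - 4 * ε)) / 2)
    (hτ : τ = η * (η + lam1 / 2) / 4)
    (hm2 : 2 ≤ m) (hmn : m ≤ n - 1)
    (hdimD2 : finrank ℝ (D2s lam1 e1 K) = m - 1)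
    (hsplit : (ℝ ∙ e1) ⊔ D2s lam1 e1 K ⊔ D3s μ e1 K = ⊤)
    (hLD3 : ∀ v1 ∈ D2s lam1 e1 K, ∀ v2 ∈ D2s lam1 e1 K,
      Lop lam1 e1 K v1 v2 ∈ D3s μ e1 K)
    (hKD2 : ∀ v ∈ D2s lam1 e1 K, ∀ w ∈ D3s μ e1 K, K v w ∈ D2s lam1 e1 K)
    (w : V) (hw : w ∈ D3s μ e1 K)
    (hworth : ∀ v1 ∈ D2s lam1 e1 K, ∀ v2 ∈ D2s lam1 e1 K,
      ⟪Lop lam1 e1 K v1 v2, w⟫ = 0) :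
    (∀ v1 ∈ D2s lam1 e1 K, ∀ v2 ∈ D2s lam1 e1 K,
        K (Lop lam1 e1 K v1 v2) w = (η * μ * ⟪v1, v2⟫) • w) ∧
    (∀ v ∈ D2s lam1 e1 K, K v w = 0) := by
  classical
  -- scalar identities
  have hsq : Real.sqrt (lam1 ^ 2 - 4 * ε) ^ 2 = lam1 ^ 2 - 4 * ε := Real.sq_sqrt hdisc.le
  have hspos : 0 < Real.sqrt (lam1 ^ 2 - 4 * ε) := Real.sqrt_pos.mpr hdisc
  have hmueq : μ ^ 2 - lam1 * μ + ε = 0 := by rw [hμ]; nlinarith [hsq]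
  have hetaeq : lam1 / 2 - μ = η := by rw [hη, hμ]; ring
  have hetapos : 0 < η := by rw [hη]; linarith
  -- membership unpacking
  have memD2 : ∀ v, v ∈ D2s lam1 e1 K → ⟪e1, v⟫ = 0 ∧ K e1 v = (lam1 / 2) • v := by
    intro v hv
    obtain ⟨h1, h2⟩ := Submodule.mem_inf.mp hv
    exact ⟨(Submodule.mem_orthogonal _ v).mp h1 e1 (Submodule.mem_span_singleton_self e1),
      Module.End.mem_eigenspace_iff.mp h2⟩
  have memD3 : ∀ u, u ∈ D3s μ e1 K → ⟪e1, u⟫ = 0 ∧ K e1 u = μ • u := by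
    intro u hu
    obtain ⟨h1, h2⟩ := Submodule.mem_inf.mp hu
    exact ⟨(Submodule.mem_orthogonal _ u).mp h1 e1 (Submodule.mem_span_singleton_self e1),
      Module.End.mem_eigenspace_iff.mp h2⟩
  have hwe1 : ⟪e1, w⟫ = 0 := (memD3 w hw).1
  have hwK : K e1 w = μ • w := (memD3 w hw).2
  have hKwe1 : K w e1 = μ • w := by rw [hKsymm]; exact hwK
  -- L decomposition of K on D2 × D2
  have hKL : ∀ v1 v2 : V, K v1 v2 = Lop lam1 e1 K v1 v2 + (lam1 / 2 * ⟪v1, v2⟫) • e1 := by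
    intro v1 v2; rw [Lop]; abel
  -- Part 2 : K v w = 0 for v ∈ D2
  have hKvw : ∀ v ∈ D2s lam1 e1 K, K v w = 0 := by
    intro v hv
    have hmem : K v w ∈ D2s lam1 e1 K := hKD2 v hv w hw
    have h0 : ⟪K v w, K v w⟫ = 0 := by
      rw [hKcub v w (K v w), hKL v (K v w), inner_add_left,
        hworth v hv (K v w) hmem, inner_smul_left, hwe1]
      simp
    exact inner_self_eq_zero.mp h0
  -- K e1 e1 = lam1 • e1
  have he1self : ⟪e1, e1⟫ = (1 : ℝ) := by
    rw [real_inner_self_eq_norm_sq, he1]; norm_num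
  have hKe1e1 : K e1 e1 = lam1 • e1 := by
    have hz : ∀ x : V, ⟪x, K e1 e1 - lam1 • e1⟫ = 0 := by
      intro x
      have hx : x ∈ (ℝ ∙ e1) ⊔ D2s lam1 e1 K ⊔ D3s μ e1 K := by
        rw [hsplit]; exact Submodule.mem_top
      obtain ⟨a, ha, c, hc, rfl⟩ := Submodule.mem_sup.mp hx
      obtain ⟨p, hp, q, hq, rfl⟩ := Submodule.mem_sup.mp ha
      obtain ⟨t, rfl⟩ := Submodule.mem_span_singleton.mp hp
      have hqe : ⟪q, K e1 e1 - lam1 • e1⟫ = 0 := by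
        rw [inner_sub_right, inner_smul_right, real_inner_comm e1 q, (memD2 q hq).1,
          real_inner_comm (K e1 e1) q, hKcub e1 e1 q, (memD2 q hq).2, inner_smul_left,
          real_inner_comm e1 q, (memD2 q hq).1]
        ring
      have hce : ⟪c, K e1 e1 - lam1 • e1⟫ = 0 := by
        rw [inner_sub_right, inner_smul_right, real_inner_comm e1 c, (memD3 c hc).1,
          real_inner_comm (K e1 e1) c, hKcub e1 e1 c, (memD3 c hc).2, inner_smul_left,
          real_inner_comm e1 c, (memD3 c hc).1]
        ring
      have hte : ⟪e1, K e1 e1 - lam1 • e1⟫ = 0 := by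
        rw [inner_sub_right, inner_smul_right, he1self, real_inner_comm (K e1 e1) e1, ← hlam1]
        ring
      rw [inner_add_left, inner_add_left, inner_smul_left, hte, hqe, hce]
      ring
    have := hz (K e1 e1 - lam1 • e1)
    rw [inner_self_eq_zero, sub_eq_zero] at this
    exact this
  -- D2 ⟂ D3
  have hD23 : ∀ v ∈ D2s lam1 e1 K, ∀ u ∈ D3s μ e1 K, ⟪v, u⟫ = 0 := by
    intro v hv u hu
    have h1 : ⟪K e1 v, u⟫ = ⟪K e1 u, v⟫ := hKcub e1 v u
    rw [(memD2 v hv).2, (memD3 u hu).2, inner_smul_left, inner_smul_left,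
      real_inner_comm v u] at h1
    simp only [RCLike.star_def, starRingEnd_apply, star_trivial] at h1
    have h2 : (lam1 / 2 - μ) * ⟪v, u⟫ = 0 := by linarith
    rw [hetaeq] at h2
    rcases mul_eq_zero.mp h2 with h | h
    · exact absurd h (ne_of_gt hetapos)
    · exact h
  -- linearity helpers for Rc in the last slot
  have hRsmul : ∀ X Y U : V, ∀ c : ℝ, Rc ε K X Y (c • U) = c • Rc ε K X Y U := by
    intro X Y U c
    simp only [Rc, inner_smul_right, map_smul]
    module
  have hRadd : ∀ X Y Z U : V, Rc ε K X Y (Z + U) = Rc ε K X Y Z + Rc ε K X Y U := by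
    intro X Y Z U
    simp only [Rc, inner_add_right, map_add]
    module
  -- Rc ε K e1 w e1 = 0
  have hR1 : Rc ε K e1 w e1 = 0 := by
    rw [Rc, hKwe1, hKe1e1, real_inner_comm e1 w, hwe1, he1self, map_smul, map_smul, hwK, hKwe1]
    match_scalars <;> linarith [hmueq]
  -- Rc ε K e1 w v = 0 for v in D2
  have hR2 : ∀ v ∈ D2s lam1 e1 K, Rc ε K e1 w v = 0 := by
    intro v hv
    have h1 : K w v = 0 := by rw [hKsymm]; exact hKvw v hv
    have h2 : ⟪w, v⟫ = 0 := by rw [real_inner_comm]; exact hD23 v hv w hw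
    rw [Rc, h1, (memD2 v hv).2, map_smul, h1, h2, (memD2 v hv).1, map_zero]
    simp
  -- main computation
  have main : ∀ v1 ∈ D2s lam1 e1 K, ∀ v2 ∈ D2s lam1 e1 K,
      K (Lop lam1 e1 K v1 v2) w = (η * μ * ⟪v1, v2⟫) • w := by
    intro v1 hv1 v2 hv2
    have hlD3 := hLD3 v1 hv1 v2 hv2
    have hle1 : ⟪e1, Lop lam1 e1 K v1 v2⟫ = 0 := (memD3 _ hlD3).1
    have hlK : K e1 (Lop lam1 e1 K v1 v2) = μ • Lop lam1 e1 K v1 v2 := (memD3 _ hlD3).2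
    -- Rc ε K e1 w ℓ = 0
    have hR3 : Rc ε K e1 w (Lop lam1 e1 K v1 v2) = 0 := by
      have hp := hpar e1 w v1 v2
      rw [hR2 v1 hv1, hR2 v2 hv2, map_zero, map_zero, LinearMap.zero_apply, add_zero,
        hKL v1 v2, hRadd, hRsmul, hR1, smul_zero, add_zero] at hp
      exact hp
    -- hence K e1 (K w ℓ) = μ • K w ℓ
    have hR4 : K e1 (K w (Lop lam1 e1 K v1 v2)) = μ • K w (Lop lam1 e1 K v1 v2) := by
      have h2 : ⟪w, Lop lam1 e1 K v1 v2⟫ = 0 := by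
        rw [real_inner_comm]; exact hworth v1 hv1 v2 hv2
      rw [Rc, h2, hle1, hlK, map_smul] at hR3
      simp only [zero_smul, sub_zero, smul_zero, zero_sub] at hR3
      have h3 : μ • K w (Lop lam1 e1 K v1 v2) - K e1 (K w (Lop lam1 e1 K v1 v2)) = 0 := by
        linear_combination (norm := module) hR3
      exact (sub_eq_zero.mp h3).symm
    -- Rc ε K v1 w e1 = 0
    have hKv1w : K v1 w = 0 := hKvw v1 hv1
    have hKwv1 : K w v1 = 0 := by rw [hKsymm]; exact hKv1w
    have hR5 : Rc ε K v1 w e1 = 0 := by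
      rw [Rc, hKwe1, map_smul, hKv1w, smul_zero, real_inner_comm e1 w, hwe1,
        real_inner_comm e1 v1, (memD2 v1 hv1).1]
      rw [hKsymm v1 e1, (memD2 v1 hv1).2, map_smul, hKwv1]
      simp [(memD2 v1 hv1).1]
    -- the key equation from parallelism
    have hKwv2 : K w v2 = 0 := by rw [hKsymm]; exact hKvw v2 hv2
    have hA : Rc ε K v1 w v2 =
        -(ε * ⟪v1, v2⟫) • w + K w (Lop lam1 e1 K v1 v2)
          + (lam1 / 2 * ⟪v1, v2⟫ * μ) • w := by
      rw [Rc, hKwv2, map_zero, hKL v1 v2, map_add, map_smul, hKwe1,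
        real_inner_comm v2 w, hD23 v2 hv2 w hw]
      match_scalars <;> ring
    have hp := hpar v1 w v2 e1
    rw [hR5, map_zero, add_zero, hKsymm v2 e1, (memD2 v2 hv2).2, hRsmul,
      hKsymm (Rc ε K v1 w v2) e1] at hp
    -- compute K e1 (Rc v1 w v2) = μ • Rc v1 w v2
    have hKe1A : K e1 (Rc ε K v1 w v2) = μ • Rc ε K v1 w v2 := by
      rw [hA, map_add, map_add, map_smul, map_smul, hwK, hR4]
      module
    rw [hKe1A] at hp
    -- (lam1/2 - μ) • A = 0
    have hA0 : Rc ε K v1 w v2 = 0 := by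
      have h6 : (lam1 / 2 - μ) • Rc ε K v1 w v2 = 0 := by
        rw [sub_smul, hp, sub_self]
      rw [hetaeq] at h6
      rcases smul_eq_zero.mp h6 with h | h
      · exact absurd h (ne_of_gt hetapos)
      · exact h
    rw [hA] at hA0
    have hcoef : ε - lam1 / 2 * μ = η * μ := by linear_combination hmueq + μ * hetaeq
    have hfin : K w (Lop lam1 e1 K v1 v2) = (η * μ * ⟪v1, v2⟫) • w := by
      have : K w (Lop lam1 e1 K v1 v2) = ((ε - lam1 / 2 * μ) * ⟪v1, v2⟫) • w := by
        linear_combination (norm := module) hA0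
      rw [this, hcoef]
    rw [hKsymm]; exact hfin
  exact ⟨main, hKvw⟩


end
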